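/- Let x₁,…,x_n and y₁,…,y_m be odd nonnegative integers such that Σ_{j=1}^{m} (y_j − 1) ≡ Σ_{i=1}^{n} (x_i − 1) (mod 4). Define, on a neighborhood of the imaginary unit i in ℂ, f(q) = ∏_{i=1}^{n} (q^{x_i} − q^{−x_i})/(q − q⁻¹) − ∏_{j=1}^{m} (q^{y_j} − q^{−y_j})/(q − q⁻¹). Then f has a zero of order at least 2 at q = i; that is, f(i) = 0 and deriv f i = 0. -/

import Mathlib

open Complex

private lemma I_ne : (Complex.I : ℂ) ≠ 0 := Complex.I_ne_zero

private lemma den_val : Complex.I - Complex.I⁻¹ = 2 * Complex.I := by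
  rw [Complex.inv_I]; ring

private lemma qfactor_hasDerivAt (n : ℕ) (hn : Odd n) :
    HasDerivAt (fun q : ℂ => (q ^ n - q ^ (-(n : ℤ))) / (q - q⁻¹)) 0 Complex.I := by
  obtain ⟨k, hk⟩ := hn
  have hu := (hasDerivAt_pow n Complex.I).fun_sub
    (hasDerivAt_zpow (-(n : ℤ)) Complex.I (Or.inl I_ne))
  have hv : HasDerivAt (fun q : ℂ => q - q⁻¹) (1 - (-(Complex.I ^ 2)⁻¹)) Complex.I :=
    (hasDerivAt_id Complex.I).sub (hasDerivAt_inv I_ne)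
  have hv0 : Complex.I - Complex.I⁻¹ ≠ 0 := by
    rw [den_val]; simp [I_ne]
  have hu0 : (n : ℂ) * Complex.I ^ (n - 1) - (Int.cast (-(n : ℤ))) * Complex.I ^ (-(n : ℤ) - 1) = 0 := by
    have h1 : n - 1 = 2 * k := by omega
    have h2 : (-(n : ℤ) - 1) = (2 : ℤ) * (-((k : ℤ) + 1)) := by omega
    rw [h1, h2, pow_mul, zpow_mul, Complex.I_sq]
    rw [show ((2 : ℤ)) = ((2 : ℕ) : ℤ) by norm_num, zpow_natCast, Complex.I_sq]
    rw [show (-((k : ℤ) + 1)) = -(((k + 1 : ℕ) : ℤ)) by push_cast; ring]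
    rw [zpow_neg, zpow_natCast]
    rcases Nat.even_or_odd k with he | ho
    · simp [pow_succ, he.neg_one_pow, inv_neg]
    · simp [pow_succ, ho.neg_one_pow, inv_neg]
  have hv0' : (1 : ℂ) - (-(Complex.I ^ 2)⁻¹) = 0 := by
    rw [Complex.I_sq]; norm_num
  have := hu.fun_div hv hv0
  rw [hu0, hv0'] at this
  simpa using this

private lemma qfactor_val (n : ℕ) (hn : Odd n) :
    (Complex.I ^ n - Complex.I ^ (-(n : ℤ))) / (Complex.I - Complex.I⁻¹)
      = Complex.I ^ (n - 1) := by
  obtain ⟨k, hk⟩ := hn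
  have h1 : Complex.I ^ (-(n : ℤ)) = -Complex.I ^ n := by
    rw [zpow_neg, zpow_natCast]
    rw [hk, pow_succ, pow_mul, Complex.I_sq]
    rw [mul_inv, Complex.inv_I]
    rcases Nat.even_or_odd k with he | ho
    · rw [he.neg_one_pow]; simp
    · rw [ho.neg_one_pow]; norm_num
  rw [h1, den_val]
  have h2 : n - 1 = 2 * k := by omega
  rw [h2, hk, pow_succ, pow_mul]
  field_simp
  ring

/-- If `x₁,…,x_N` and `y₁,…,y_M` are odd with `Σ(y_j−1) ≡ Σ(x_i−1) (mod 4)`, then the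
difference of the products of the corresponding quantum integers has a zero of order
at least `2` at `q = i`. -/
theorem order_two_zero_of_odd_quantumIntegers (N M : ℕ) (x : Fin N → ℕ) (y : Fin M → ℕ)
    (hx : ∀ i, Odd (x i)) (hy : ∀ j, Odd (y j))
    (hmod : (∑ j, (y j - 1)) ≡ (∑ i, (x i - 1)) [MOD 4])
    (f : ℂ → ℂ)
    (hf : f = fun q : ℂ =>
      (∏ i, (q ^ (x i) - q ^ (-(x i : ℤ))) / (q - q⁻¹))
        - ∏ j, (q ^ (y j) - q ^ (-(y j : ℤ))) / (q - q⁻¹)) :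
    f Complex.I = 0 ∧ deriv f Complex.I = 0 := by
  have hI4 : Complex.I ^ (4 : ℕ) = 1 := Complex.I_pow_four
  have hpow_mod : ∀ a : ℕ, Complex.I ^ a = Complex.I ^ (a % 4) := by
    intro a
    conv_lhs => rw [← Nat.div_add_mod a 4]
    rw [pow_add, pow_mul, hI4, one_pow, one_mul]
  have hval : f Complex.I = 0 := by
    rw [hf]
    simp only
    rw [Finset.prod_congr rfl (fun i _ => qfactor_val (x i) (hx i)),
        Finset.prod_congr rfl (fun j _ => qfactor_val (y j) (hy j)),
        Finset.prod_pow_eq_pow_sum, Finset.prod_pow_eq_pow_sum]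
    rw [hpow_mod (∑ i, (x i - 1)), hpow_mod (∑ j, (y j - 1)), hmod, sub_self]
  refine ⟨hval, ?_⟩
  have h1 : HasDerivAt (fun q : ℂ => ∏ i, (q ^ (x i) - q ^ (-(x i : ℤ))) / (q - q⁻¹))
      0 Complex.I := by
    have := HasDerivAt.fun_finsetProd (u := Finset.univ)
      (f := fun i (q : ℂ) => (q ^ (x i) - q ^ (-(x i : ℤ))) / (q - q⁻¹))
      (f' := fun _ => 0) (x := Complex.I)
      (fun i _ => qfactor_hasDerivAt (x i) (hx i))
    simpa using this
  have h2 : HasDerivAt (fun q : ℂ => ∏ j, (q ^ (y j) - q ^ (-(y j : ℤ))) / (q - q⁻¹))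
      0 Complex.I := by
    have := HasDerivAt.fun_finsetProd (u := Finset.univ)
      (f := fun j (q : ℂ) => (q ^ (y j) - q ^ (-(y j : ℤ))) / (q - q⁻¹))
      (f' := fun _ => 0) (x := Complex.I)
      (fun j _ => qfactor_hasDerivAt (y j) (hy j))
    simpa using this
  have hd : HasDerivAt f 0 Complex.I := by
    rw [hf]
    simpa using h1.fun_sub h2
  simpa using hd.deriv
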